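/- Let 0 < λ₁ < λ₂ < 1 and let λ' ∈ (λ₁, λ₂) satisfy λ' > λ₁(1+λ₂)/(1+λ₁). Define f : [0,∞) → ℝ by f(t) = (λ₂ - λ')(1 - e^{-t}) + λ' t + 1. Then f(0) = 1, f'(0) = λ₂, f'' < 0 everywhere, f' > λ₁ everywhere, and f'(t)/f(t) > λ₁/(1 + λ₁ t) for all t ≥ 0. -/

import Mathlib

/-- properties of f(t) = (λ₂-λ')(1-e^{-t}) + λ' t + 1 on [0,∞). -/
theorem stmt0 (l1 l2 l' : ℝ) (h1 : 0 < l1) (h12 : l1 < l2) (h2 : l2 < 1)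
    (hl'1 : l1 < l') (hl'2 : l' < l2) (hl' : l' > l1 * (1 + l2) / (1 + l1))
    (f : ℝ → ℝ) (hf : ∀ t, f t = (l2 - l') * (1 - Real.exp (-t)) + l' * t + 1) :
    f 0 = 1 ∧ deriv f 0 = l2 ∧
      (∀ t : ℝ, 0 ≤ t → deriv (deriv f) t < 0) ∧
      (∀ t : ℝ, 0 ≤ t → l1 < deriv f t) ∧
      (∀ t : ℝ, 0 ≤ t → l1 / (1 + l1 * t) < deriv f t / f t) := by
  have hfe : f = fun t => (l2 - l') * (1 - Real.exp (-t)) + l' * t + 1 := funext hf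
  subst hfe
  have ha : 0 < l2 - l' := by linarith
  have hd : ∀ t : ℝ, HasDerivAt (fun t => (l2 - l') * (1 - Real.exp (-t)) + l' * t + 1)
      ((l2 - l') * Real.exp (-t) + l') t := by
    intro t
    have h1' : HasDerivAt (fun t : ℝ => Real.exp (-t)) (Real.exp (-t) * (-1)) t :=
      (hasDerivAt_neg t).exp
    have := ((((hasDerivAt_const t (1:ℝ)).sub h1').const_mul (l2 - l')).add
      ((hasDerivAt_id t).const_mul l')).add_const 1
    exact this.congr_deriv (by ring)
  have hderiv : deriv (fun t => (l2 - l') * (1 - Real.exp (-t)) + l' * t + 1)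
      = fun t => (l2 - l') * Real.exp (-t) + l' := funext fun t => (hd t).deriv
  have hd2 : ∀ t : ℝ, HasDerivAt (fun t => (l2 - l') * Real.exp (-t) + l')
      (-((l2 - l') * Real.exp (-t))) t := by
    intro t
    have h1' : HasDerivAt (fun t : ℝ => Real.exp (-t)) (Real.exp (-t) * (-1)) t :=
      (hasDerivAt_neg t).exp
    have := (h1'.const_mul (l2 - l')).add_const l'
    exact this.congr_deriv (by ring)
  refine ⟨by simp, ?_, ?_, ?_, ?_⟩
  · rw [hderiv]; simp
  · intro t ht
    rw [hderiv, (hd2 t).deriv]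
    have := Real.exp_pos (-t)
    nlinarith
  · intro t ht
    rw [hderiv]
    have := Real.exp_pos (-t)
    show l1 < (l2 - l') * Real.exp (-t) + l'
    nlinarith
  · intro t ht
    rw [hderiv]
    show l1 / (1 + l1 * t) < ((l2 - l') * Real.exp (-t) + l') / ((l2 - l') * (1 - Real.exp (-t)) + l' * t + 1)
    have hE : Real.exp (-t) ≤ 1 := Real.exp_le_one_iff.mpr (by linarith)
    have hEp : 0 < Real.exp (-t) := Real.exp_pos (-t)
    have hden : 0 < 1 + l1 * t := by nlinarith
    have hfpos : 0 < (l2 - l') * (1 - Real.exp (-t)) + l' * t + 1 := by nlinarith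
    rw [div_lt_div_iff₀ hden hfpos]
    have hkey : l1 * (1 + l2) < l' * (1 + l1) := by
      rw [gt_iff_lt, div_lt_iff₀ (by linarith : (0:ℝ) < 1 + l1)] at hl'
      linarith
    nlinarith [mul_pos (mul_pos ha hEp) (by nlinarith : (0:ℝ) < 1 + l1 + l1 * t)]
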